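/- Let n be a positive integer, let Q = [0,1)ⁿ ⊂ ℝⁿ be the half-open unit cube, and let ℤⁿ ⊂ ℝⁿ be the integer lattice. Then η(Q, ℤⁿ) = 0, and for every ε > 0 with 2·(1+ε)ⁿ ≤ 2ⁿ + 1, η((1+ε)Q, ℤⁿ) = (2/(1+ε))ⁿ − 1. In particular α ↦ η(αQ, ℤⁿ) is not monotonically non-increasing for n ≥ 1. -/

import Mathlib

open MeasureTheory Set Pointwise Filter
open scoped ENNReal

noncomputable section

abbrev Euc (n : ℕ) := EuclideanSpace ℝ (Fin n)

/-- `N(L, K, x) = |L ∩ (K + x)|`. -/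
def Ncount {n : ℕ} (L K : Set (Euc n)) (x : Euc n) : ℕ :=
  (L ∩ (x +ᵥ K)).ncard

/-- Covering smoothness `η(K, L)`, where `dens` is the asymptotic density of `L`
(`dens = 1/covol(L)` for a full-rank lattice `L`). -/
def eta {n : ℕ} (K L : Set (Euc n)) (dens : ℝ) : ℝ≥0∞ :=
  ⨆ x : Euc n, ENNReal.ofReal |(Ncount L K x : ℝ) / ((volume K).toReal * dens) - 1|

/-- The full-rank lattice `g ℤⁿ` (for `g` an invertible matrix). -/
def latticeOf {n : ℕ} (g : Matrix (Fin n) (Fin n) ℝ) : Set (Euc n) :=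
  {x | ∃ m : Fin n → ℤ, ∀ i, x i = g.mulVec (fun j => (m j : ℝ)) i}

/-- Membership in `Conv_n`: bounded convex subset of `ℝⁿ` with nonempty interior. -/
def IsConvBody {n : ℕ} (K : Set (Euc n)) : Prop :=
  Convex ℝ K ∧ Bornology.IsBounded K ∧ (interior K).Nonempty

/-- The translates `ℓ + K`, `ℓ ∈ L`, are pairwise disjoint. -/
def IsPacking {n : ℕ} (L K : Set (Euc n)) : Prop :=
  L.Pairwise fun y z => Disjoint (y +ᵥ K) (z +ᵥ K)

/-- The translates of `K` by `L` cover `ℝⁿ`. -/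
def IsCovering {n : ℕ} (L K : Set (Euc n)) : Prop :=
  L + K = univ

/-- Covering radius of `L` with respect to `K`. -/
def rCov {n : ℕ} (K L : Set (Euc n)) : ℝ :=
  sInf {α : ℝ | 0 < α ∧ IsCovering L (α • K)}

/-- Packing radius of `L` with respect to `K`. -/
def rPack {n : ℕ} (K L : Set (Euc n)) : ℝ :=
  sSup {α : ℝ | 0 < α ∧ IsPacking L (α • K)}

/-- `ρ_K(L)`: ratio of covering and packing radii. -/
def rhoK {n : ℕ} (K L : Set (Euc n)) : ℝ := rCov K L / rPack K L

/-- The construction A lattice `(1/p)·π_p⁻¹(S)`. -/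
def constA {n : ℕ} (p : ℕ) (S : Submodule (ZMod p) (Fin n → ZMod p)) : Set (Euc n) :=
  {x | ∃ m : Fin n → ℤ, (fun i => (m i : ZMod p)) ∈ S ∧ ∀ i, x i = (m i : ℝ) / p}

/-- The lattice `L(S) = (1/p)·g·π_p⁻¹(S)`, for `L = g ℤⁿ`. -/
def latticeOfS {n : ℕ} (g : Matrix (Fin n) (Fin n) ℝ) (p : ℕ)
    (S : Submodule (ZMod p) (Fin n → ZMod p)) : Set (Euc n) :=
  {x | ∃ m : Fin n → ℤ, (fun i => (m i : ZMod p)) ∈ S ∧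
    ∀ i, x i = g.mulVec (fun j => (m j : ℝ)) i / p}

/-- `Φ_{K,L}(ε)` for a lattice of covolume `covol`. -/
def Phi {n : ℕ} (K L : Set (Euc n)) (covol ε : ℝ) : ℝ :=
  sSup {v : ℝ | ∃ α : ℝ, 0 < α ∧ v = (volume (α • K)).toReal / covol ∧
    ENNReal.ofReal ε < eta (α • K) L (1 / covol)}

/-- Discrete smoothness `η_{F_p}(A, S)`. -/
def etaFp {p n : ℕ} (A S : Set (Fin n → ZMod p)) : ℝ :=
  ⨆ x : Fin n → ZMod p,
    |(((x +ᵥ S) ∩ A).ncard : ℝ) / ((S.ncard : ℝ) * (A.ncard : ℝ) / (p : ℝ) ^ n) - 1|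

/-- Number of `r`-dimensional subspaces of `F_pⁿ`. -/
def GrCard (p n r : ℕ) : ℕ :=
  Nat.card {S : Submodule (ZMod p) (Fin n → ZMod p) // Module.finrank (ZMod p) S = r}

/-- the half-open unit cube tiles perfectly under `ℤⁿ`, but its
slight dilates do not; hence `α ↦ η(αQ, ℤⁿ)` is not monotonically
non-increasing. -/
lemma cube_smul {n : ℕ} {c : ℝ} (hc : 0 < c) :
    c • {x : Euc n | ∀ i, x i ∈ Set.Ico (0:ℝ) 1} = {x : Euc n | ∀ i, x i ∈ Set.Ico (0:ℝ) c} := by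
  ext y
  rw [Set.mem_smul_set_iff_inv_smul_mem₀ hc.ne']
  simp only [Set.mem_setOf_eq, Set.mem_Ico, PiLp.smul_apply, smul_eq_mul]
  have hinv : 0 < c⁻¹ := inv_pos.mpr hc
  constructor <;> intro h i <;> obtain ⟨h1, h2⟩ := h i <;> constructor
  · nlinarith [mul_inv_cancel₀ hc.ne']
  · nlinarith [mul_inv_cancel₀ hc.ne']
  · positivity
  · nlinarith [mul_inv_cancel₀ hc.ne']

lemma cube_vol {n : ℕ} {c : ℝ} (hc : 0 ≤ c) :
    volume {x : Euc n | ∀ i, x i ∈ Set.Ico (0:ℝ) c} = ENNReal.ofReal c ^ n := by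
  have hset : {x : Euc n | ∀ i, x i ∈ Set.Ico (0:ℝ) c}
      = (MeasurableEquiv.toLp 2 (Fin n → ℝ)).symm ⁻¹' (Set.univ.pi fun _ => Set.Ico (0:ℝ) c) := by
    ext x
    simp [Set.mem_pi]
  rw [hset, (EuclideanSpace.volume_preserving_symm_measurableEquiv_toLp (Fin n)).measure_preimage
      ((MeasurableSet.univ_pi fun _ => measurableSet_Ico).nullMeasurableSet),
    volume_pi_pi]
  simp [Real.volume_Ico]

lemma cube_count {n : ℕ} (c : ℝ) (x : Euc n) :
    Ncount (latticeOf (1 : Matrix (Fin n) (Fin n) ℝ)) {y : Euc n | ∀ i, y i ∈ Set.Ico (0:ℝ) c} x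
      = ∏ i, (⌈x i + c⌉ - ⌈x i⌉).toNat := by
  classical
  set φ : (Fin n → ℤ) → Euc n := fun m => WithLp.toLp 2 (fun i => (m i : ℝ) : Fin n → ℝ) with hφ
  have hinj : Function.Injective φ := by
    intro a b hab
    funext i
    have : ((a i : ℝ)) = b i := congrArg (fun v : Euc n => v i) hab
    exact_mod_cast this
  have hset : latticeOf (1 : Matrix (Fin n) (Fin n) ℝ) ∩
      (x +ᵥ {y : Euc n | ∀ i, y i ∈ Set.Ico (0:ℝ) c})
      = φ '' (Set.univ.pi fun i => Set.Ico ⌈x i⌉ ⌈x i + c⌉) := by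
    ext y
    simp only [Set.mem_inter_iff, latticeOf, Set.mem_setOf_eq, Matrix.one_mulVec,
      Set.mem_vadd_set_iff_neg_vadd_mem, Set.mem_image, Set.mem_pi, Set.mem_univ,
      forall_true_left, Set.mem_Ico]
    constructor
    · rintro ⟨⟨m, hm⟩, hy⟩
      refine ⟨m, fun i => ?_, ?_⟩
      · have h := hy i
        rw [show ((-x +ᵥ y) i) = y i - x i by
          simp [vadd_eq_add, PiLp.add_apply, PiLp.neg_apply]; ring] at h
        rw [hm i] at h
        exact ⟨Int.ceil_le.mpr (by linarith [h.1]), Int.lt_ceil.mpr (by linarith [h.2])⟩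
      · ext i; exact (hm i).symm
    · rintro ⟨m, hm, rfl⟩
      refine ⟨⟨m, fun i => rfl⟩, fun i => ?_⟩
      rw [show ((-x +ᵥ φ m) i) = (m i : ℝ) - x i by
        simp [hφ, vadd_eq_add, PiLp.add_apply, PiLp.neg_apply]; ring]
      obtain ⟨h1, h2⟩ := hm i
      exact ⟨by linarith [Int.ceil_le.mp h1], by linarith [Int.lt_ceil.mp h2]⟩
  rw [Ncount, hset, Set.ncard_image_of_injective _ hinj, ← Nat.card_coe_set_eq,
    Nat.card_congr (Equiv.Set.univPi _), Nat.card_pi]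
  congr 1
  funext i
  rw [Nat.card_coe_set_eq, ← Finset.coe_Ico, Set.ncard_coe_finset, Int.card_Ico]

lemma eta_cube {n : ℕ} {c : ℝ} (hc : 0 < c) :
    eta {x : Euc n | ∀ i, x i ∈ Set.Ico (0:ℝ) c} (latticeOf 1) 1
      = ⨆ x : Euc n,
          ENNReal.ofReal |(∏ i, ((⌈x i + c⌉ - ⌈x i⌉).toNat : ℝ)) / c ^ n - 1| := by
  unfold eta
  refine iSup_congr fun x => ?_
  rw [cube_count, cube_vol hc.le, ENNReal.toReal_pow, ENNReal.toReal_ofReal hc.le, mul_one]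
  push_cast
  rfl

lemma eta_cube_one {n : ℕ} :
    eta {x : Euc n | ∀ i, x i ∈ Set.Ico (0:ℝ) 1} (latticeOf 1) 1 = 0 := by
  rw [eta_cube one_pos]
  simp [Int.ceil_add_one]

lemma dbound {c : ℝ} (h1 : 1 ≤ c) (h2 : c ≤ 2) (t : ℝ) :
    1 ≤ (⌈t + c⌉ - ⌈t⌉).toNat ∧ (⌈t + c⌉ - ⌈t⌉).toNat ≤ 2 := by
  have hlo : ⌈t⌉ + 1 ≤ ⌈t + c⌉ := by
    rw [← Int.ceil_add_one]
    exact Int.ceil_le_ceil (by linarith)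
  have hhi : ⌈t + c⌉ ≤ ⌈t⌉ + 2 := by
    rw [show (⌈t⌉ + 2 : ℤ) = ⌈t + (2:ℤ)⌉ by rw [Int.ceil_add_intCast]]
    exact Int.ceil_le_ceil (by push_cast; linarith)
  omega

lemma eta_lower {n : ℕ} {c : ℝ} (hc1 : 1 < c) (hc2 : c < 2) :
    ENNReal.ofReal ((2:ℝ) ^ n / c ^ n - 1)
      ≤ eta {x : Euc n | ∀ i, x i ∈ Set.Ico (0:ℝ) c} (latticeOf 1) 1 := by
  have hc0 : (0:ℝ) < c := by linarith
  rw [eta_cube hc0]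
  set x0 : Euc n := WithLp.toLp 2 (fun _ => (1 - c) / 2) with hx0
  have key : ∀ i : Fin n, ((⌈x0 i + c⌉ - ⌈x0 i⌉).toNat : ℝ) = 2 := by
    intro i
    have e1 : ⌈x0 i + c⌉ = 2 := by
      rw [Int.ceil_eq_iff]
      constructor <;> simp only [hx0] <;> push_cast <;> linarith
    have e2 : ⌈x0 i⌉ = 0 := by
      rw [Int.ceil_eq_iff]
      constructor <;> simp only [hx0] <;> push_cast <;> linarith
    rw [e1, e2]
    norm_num [Int.toNat]
  have hval : (∏ i : Fin n, ((⌈x0 i + c⌉ - ⌈x0 i⌉).toNat : ℝ)) = 2 ^ n := by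
    rw [Finset.prod_congr rfl fun i _ => key i, Finset.prod_const, Finset.card_univ,
      Fintype.card_fin]
  have habs : |(∏ i : Fin n, ((⌈x0 i + c⌉ - ⌈x0 i⌉).toNat : ℝ)) / c ^ n - 1|
      = (2:ℝ) ^ n / c ^ n - 1 := by
    rw [hval, abs_of_nonneg]
    have hcn : c ^ n ≤ 2 ^ n := pow_le_pow_left₀ hc0.le hc2.le n
    have hcnpos : (0:ℝ) < c ^ n := pow_pos hc0 n
    rw [sub_nonneg, le_div_iff₀ hcnpos, one_mul]
    exact hcn
  calc ENNReal.ofReal ((2:ℝ) ^ n / c ^ n - 1)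
      = ENNReal.ofReal |(∏ i : Fin n, ((⌈x0 i + c⌉ - ⌈x0 i⌉).toNat : ℝ)) / c ^ n - 1| := by
        rw [habs]
    _ ≤ _ := le_iSup (fun x : Euc n =>
        ENNReal.ofReal |(∏ i, ((⌈x i + c⌉ - ⌈x i⌉).toNat : ℝ)) / c ^ n - 1|) x0

theorem statement17 (n : ℕ) (hn : 1 ≤ n) :
    eta {x : Euc n | ∀ i, x i ∈ Set.Ico (0 : ℝ) 1}
      (latticeOf (1 : Matrix (Fin n) (Fin n) ℝ)) 1 = 0 ∧
    (∀ ε : ℝ, 0 < ε → 2 * (1 + ε) ^ n ≤ 2 ^ n + 1 →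
      eta ((1 + ε) • {x : Euc n | ∀ i, x i ∈ Set.Ico (0 : ℝ) 1})
          (latticeOf (1 : Matrix (Fin n) (Fin n) ℝ)) 1
        = ENNReal.ofReal ((2 / (1 + ε)) ^ n - 1)) ∧
    ¬ AntitoneOn
        (fun α : ℝ => eta (α • {x : Euc n | ∀ i, x i ∈ Set.Ico (0 : ℝ) 1})
          (latticeOf (1 : Matrix (Fin n) (Fin n) ℝ)) 1)
        (Set.Ioi 0) := by
  have h2pow : (1:ℝ) < 2 ^ n := by
    calc (1:ℝ) < 2 := one_lt_two
    _ ≤ 2 ^ n := le_self_pow₀ one_le_two (by omega)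
  refine ⟨eta_cube_one, ?_, ?_⟩
  · intro ε hε hcond
    set c : ℝ := 1 + ε with hcdef
    have hc1 : 1 < c := by simp [hcdef]; linarith
    have hc0 : (0:ℝ) < c := by linarith
    have hcn_pos : (0:ℝ) < c ^ n := pow_pos hc0 n
    have hcn_lt : c ^ n < 2 ^ n := by nlinarith
    have hc2 : c < 2 := lt_of_pow_lt_pow_left₀ n (by norm_num) hcn_lt
    rw [cube_smul hc0, eta_cube hc0]
    have hdivpow : (2 / c) ^ n = (2:ℝ) ^ n / c ^ n := div_pow 2 c n
    apply le_antisymm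
    · refine iSup_le fun x => ENNReal.ofReal_le_ofReal ?_
      set N : ℕ := ∏ i, (⌈x i + c⌉ - ⌈x i⌉).toNat with hN
      have hN1 : 1 ≤ N := Finset.one_le_prod' fun i _ => (dbound hc1.le hc2.le (x i)).1
      have hN2 : N ≤ 2 ^ n := by
        calc N ≤ 2 ^ Finset.univ.card :=
          Finset.prod_le_pow_card _ _ 2 fun i _ => (dbound hc1.le hc2.le (x i)).2
        _ = 2 ^ n := by rw [Finset.card_univ, Fintype.card_fin]
      set M : ℝ := ∏ i, ((⌈x i + c⌉ - ⌈x i⌉).toNat : ℝ) with hM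
      have hNM : (N:ℝ) = M := by rw [hN, hM]; push_cast; rfl
      have hN1' : (1:ℝ) ≤ M := by
        rw [← hNM]; exact_mod_cast hN1
      have hN2' : M ≤ (2:ℝ) ^ n := by
        rw [← hNM]
        calc (N:ℝ) ≤ ((2^n : ℕ) : ℝ) := by exact_mod_cast hN2
        _ = (2:ℝ) ^ n := by push_cast; ring
      rw [abs_le, hdivpow]
      have hub : M / c ^ n ≤ 2 ^ n / c ^ n := by gcongr
      have hlb : ((1:ℝ) + 2 ^ n) / c ^ n ≤ (M + 2 ^ n) / c ^ n := by gcongr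
      have h5 : (2:ℝ) ≤ ((1:ℝ) + 2 ^ n) / c ^ n := by
        rw [le_div_iff₀ hcn_pos]
        linarith
      have hadd := add_div M ((2:ℝ) ^ n) (c ^ n)
      constructor <;> [linarith; linarith]
    · calc ENNReal.ofReal ((2 / c) ^ n - 1)
          = ENNReal.ofReal ((2:ℝ) ^ n / c ^ n - 1) := by rw [hdivpow]
        _ ≤ _ := by
            have := eta_lower (n := n) hc1 hc2
            rw [eta_cube hc0] at this
            exact this
  · intro hmono
    have h32 : ((3:ℝ)/2) ∈ Set.Ioi (0:ℝ) := by norm_num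
    have h1m : (1:ℝ) ∈ Set.Ioi (0:ℝ) := by norm_num
    have hle := hmono h1m h32 (by norm_num)
    simp only [one_smul, eta_cube_one] at hle
    have hlow := eta_lower (n := n) (c := 3/2) (by norm_num) (by norm_num)
    rw [← cube_smul (by norm_num : (0:ℝ) < 3/2)] at hlow
    have hpos : (0:ℝ) < (2:ℝ) ^ n / (3/2) ^ n - 1 := by
      have : ((3:ℝ)/2) ^ n < 2 ^ n := by
        apply pow_lt_pow_left₀ (by norm_num) (by norm_num)
        omega
      have hp : (0:ℝ) < ((3:ℝ)/2) ^ n := by positivity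
      rw [sub_pos, lt_div_iff₀ hp, one_mul]
      exact this
    have : (0:ℝ≥0∞) < ENNReal.ofReal ((2:ℝ) ^ n / (3/2) ^ n - 1) := by
      rw [ENNReal.ofReal_pos]; exact hpos
    exact ((this.trans_le hlow).trans_le hle).false
end
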